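/- Let x_1, …, x_d ∈ ℝ^p, let c_1, …, c_d ∈ ℝ and let k ≥ 0 be an integer. Then Σ_{i=1}^{d} c_i (w^T x_i)^k = 0 for all w ∈ ℝ^p if and only if Σ_{i=1}^{d} c_i x_i^{⊗k} = 0 in the k-fold tensor power (ℝ^p)^{⊗k}. -/

import Mathlib

open Finset

private lemma prod_comp_eq (p k : ℕ) (g : Fin p → ℝ) (f : Fin k → Fin p) :
    ∏ m, g (f m) = ∏ j, g j ^ ((∑ m, Finsupp.single (f m) 1) j) := by
  classical
  have h : ∀ j : Fin p, ((∑ m, Finsupp.single (f m) (1:ℕ)) j)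
      = ∑ m, if f m = j then 1 else 0 := by
    intro j
    rw [Finsupp.finset_sum_apply]
    exact Finset.sum_congr rfl fun m _ => Finsupp.single_apply
  calc ∏ m, g (f m) = ∏ m, ∏ j, if f m = j then g j else 1 := by
        refine Finset.prod_congr rfl fun m _ => ?_
        rw [Finset.prod_ite_eq]
        simp
    _ = ∏ j, ∏ m, if f m = j then g j else 1 := Finset.prod_comm
    _ = ∏ j, g j ^ ((∑ m, Finsupp.single (f m) 1) j) := by
        refine Finset.prod_congr rfl fun j _ => ?_
        rw [h, ← Finset.prod_pow_eq_pow_sum]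
        refine Finset.prod_congr rfl fun m _ => ?_
        split <;> simp

private lemma prod_X_comp (p k : ℕ) (f : Fin k → Fin p) :
    ∏ m, (MvPolynomial.X (f m) : MvPolynomial (Fin p) ℝ)
      = MvPolynomial.monomial (∑ m, Finsupp.single (f m) 1) 1 := by
  classical
  induction (Finset.univ : Finset (Fin k)) using Finset.induction with
  | empty => simp [MvPolynomial.monomial_zero']
  | insert _ _ hm ih =>
      rw [Finset.prod_insert hm, Finset.sum_insert hm, ih, MvPolynomial.X,
        MvPolynomial.monomial_mul, one_mul]

/-- **Powers of linear forms and tensor powers.**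
For `x₁, …, x_d ∈ ℝ^p`, `c ∈ ℝ^d` and `k ≥ 0`:
`∑ᵢ cᵢ (wᵀxᵢ)^k = 0` for all `w ∈ ℝ^p` iff `∑ᵢ cᵢ xᵢ^{⊗k} = 0` in `(ℝ^p)^{⊗k}`. -/
theorem powers_vanish_iff_tensorPower_vanish (d p k : ℕ) (x : Fin d → Fin p → ℝ)
    (c : Fin d → ℝ) :
    (∀ w : Fin p → ℝ, ∑ i, c i * (∑ j, w j * x i j) ^ k = 0) ↔
      ∑ i, c i • (PiTensorProduct.tprod ℝ (fun _ : Fin k => x i) :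
        TensorPower ℝ k (Fin p → ℝ)) = 0 := by
  classical
  constructor
  · intro h
    -- Step 1: all "coefficients" A f vanish
    set A : (Fin k → Fin p) → ℝ := fun f => ∑ i, c i * ∏ m, x i (f m) with hA
    have hQ : (∑ i, MvPolynomial.C (c i) *
        (∑ j, MvPolynomial.X j * MvPolynomial.C (x i j)) ^ k : MvPolynomial (Fin p) ℝ) = 0 := by
      apply MvPolynomial.funext
      intro w
      simpa [map_sum] using h w
    have hQ2 : (∑ i, MvPolynomial.C (c i) *
        (∑ j, MvPolynomial.X j * MvPolynomial.C (x i j)) ^ k : MvPolynomial (Fin p) ℝ)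
        = ∑ f : Fin k → Fin p, MvPolynomial.monomial (∑ m, Finsupp.single (f m) 1) (A f) := by
      have expand : ∀ i, ((∑ j, MvPolynomial.X j * MvPolynomial.C (x i j)) ^ k
          : MvPolynomial (Fin p) ℝ)
          = ∑ f : Fin k → Fin p,
              MvPolynomial.monomial (∑ m, Finsupp.single (f m) 1) (∏ m, x i (f m)) := by
        intro i
        rw [Fintype.sum_pow]
        refine Finset.sum_congr rfl fun f _ => ?_
        rw [Finset.prod_mul_distrib, prod_X_comp, ← map_prod]
        rw [mul_comm, MvPolynomial.C_mul_monomial, mul_one]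
      rw [Finset.sum_congr rfl fun i _ => by rw [expand i, Finset.mul_sum]]
      rw [Finset.sum_comm]
      refine Finset.sum_congr rfl fun f _ => ?_
      simp only [hA, MvPolynomial.C_mul_monomial, map_sum]
    have hAf : ∀ f : Fin k → Fin p, A f = 0 := by
      intro f₀
      have hc : MvPolynomial.coeff (∑ m, Finsupp.single (f₀ m) 1)
          (∑ f : Fin k → Fin p,
            MvPolynomial.monomial (∑ m, Finsupp.single (f m) 1) (A f)) = 0 := by
        rw [← hQ2, hQ]; simp
      rw [MvPolynomial.coeff_sum] at hc
      simp only [MvPolynomial.coeff_monomial] at hc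
      rw [← Finset.sum_filter] at hc
      have hconst : ∀ f ∈ Finset.univ.filter
          (fun f : Fin k → Fin p => (∑ m, Finsupp.single (f m) 1)
            = ∑ m, Finsupp.single (f₀ m) 1), A f = A f₀ := by
        intro f hf
        rw [Finset.mem_filter] at hf
        rw [hA]
        refine Finset.sum_congr rfl fun i _ => ?_
        rw [prod_comp_eq p k (x i) f, prod_comp_eq p k (x i) f₀, hf.2]
      rw [Finset.sum_congr rfl hconst, Finset.sum_const, nsmul_eq_mul] at hc
      have hne : (Finset.univ.filter
          (fun f : Fin k → Fin p => (∑ m, Finsupp.single (f m) 1)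
            = ∑ m, Finsupp.single (f₀ m) 1)).card ≠ 0 := by
        exact Finset.card_ne_zero_of_mem (Finset.mem_filter.mpr ⟨Finset.mem_univ _, rfl⟩)
      have := mul_eq_zero.mp hc
      rcases this with h1 | h1
      · exact absurd (Nat.cast_eq_zero.mp h1) hne
      · exact h1
    -- Step 2: expand the tensor
    have hx : ∀ i, (PiTensorProduct.tprod ℝ (fun _ : Fin k => x i) :
        TensorPower ℝ k (Fin p → ℝ))
        = ∑ f : Fin k → Fin p, (∏ m, x i (f m)) •
            PiTensorProduct.tprod ℝ (fun m => (Pi.single (f m) 1 : Fin p → ℝ)) := by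
      intro i
      have hxi : (fun _ : Fin k => x i)
          = fun _ : Fin k => ∑ j, x i j • (Pi.single j 1 : Fin p → ℝ) := by
        funext m
        ext j'
        simp [Pi.single_apply, eq_comm]
      rw [hxi]
      rw [MultilinearMap.map_sum]
      refine Finset.sum_congr rfl fun f _ => ?_
      exact MultilinearMap.map_smul_univ _ _ _
    calc ∑ i, c i • (PiTensorProduct.tprod ℝ (fun _ : Fin k => x i) :
          TensorPower ℝ k (Fin p → ℝ))
        = ∑ f : Fin k → Fin p, A f •
            PiTensorProduct.tprod ℝ (fun m => (Pi.single (f m) 1 : Fin p → ℝ)) := by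
          rw [Finset.sum_congr rfl fun i _ => by rw [hx i, Finset.smul_sum]]
          rw [Finset.sum_comm]
          refine Finset.sum_congr rfl fun f _ => ?_
          rw [hA, Finset.sum_smul]
          refine Finset.sum_congr rfl fun i _ => ?_
          rw [smul_smul]
      _ = 0 := by
          rw [Finset.sum_congr rfl fun f _ => by rw [hAf f, zero_smul]]
          exact Finset.sum_const_zero
  · intro hT w
    set dotw : (Fin p → ℝ) →ₗ[ℝ] ℝ := ∑ j, w j • LinearMap.proj j with hdotw
    have hdot : ∀ v : Fin p → ℝ, dotw v = ∑ j, w j * v j := by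
      intro v; simp [hdotw]
    set L : TensorPower ℝ k (Fin p → ℝ) →ₗ[ℝ] ℝ :=
      PiTensorProduct.lift ((MultilinearMap.mkPiAlgebra ℝ (Fin k) ℝ).compLinearMap
        fun _ => dotw) with hL
    have := congrArg L hT
    rw [map_sum, map_zero] at this
    simp only [map_smul, hL, PiTensorProduct.lift.tprod,
      MultilinearMap.compLinearMap_apply, MultilinearMap.mkPiAlgebra_apply] at this
    calc ∑ i, c i * (∑ j, w j * x i j) ^ k
        = ∑ i, c i • ∏ _m : Fin k, dotw (x i) := by
          refine Finset.sum_congr rfl fun i _ => ?_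
          rw [Finset.prod_const, hdot, smul_eq_mul]
          simp
      _ = 0 := this
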